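/- (Positive correlation) Assume Q1 and A1-i. For every x ∈ Δ^𝒜, every π ∈ ℝ^𝒜, and every Δx ∈ V(x)[π], one has Δx · π ≥ 0. Moreover, if every a ∈ 𝒜 with x_a > 0 satisfies π_a = max_{b∈𝒜} π_b, then Δx · π = 0 for every Δx ∈ V(x)[π]; and if some a with x_a > 0 has π_a < max_{b∈𝒜} π_b, then Δx · π > 0 for every Δx ∈ V(x)[π]. -/
import Mathlib


open MeasureTheory Finset
open scoped Classical

/-- The maximal payoff among actions in `S`. -/
noncomputable def piStar {A : Type*} (π : A → ℝ) (S : Finset A) : ℝ :=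
  if h : S.Nonempty then S.sup' h π else 0

/-- The set of optimal actions in `S`: `b_*[π](S)`. -/
noncomputable def bStar {A : Type*} (π : A → ℝ) (S : Finset A) : Finset A :=
  S.filter (fun b => π b = piStar π S)

/-- `Q(q) = μ_Q((-∞, q])`. -/
noncomputable def Qfun (μQ : Measure ℝ) (q : ℝ) : ℝ := (μQ (Set.Iic q)).toReal

/-- `Q₋(q) = μ_Q((-∞, q))`. -/
noncomputable def Qminus (μQ : Measure ℝ) (q : ℝ) : ℝ := (μQ (Set.Iio q)).toReal

/-- `z` is an admissible transition vector for `a` at `π`. -/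
def IsAdmissible {A : Type*} [Fintype A] [DecidableEq A]
    (P : A → Finset A → ℝ) (μQ : Measure ℝ) (π : A → ℝ) (a : A) (z : A → ℝ) : Prop :=
  ∃ (y : Finset A → A → ℝ) (ρ : Finset A → ℝ),
    (∀ A' ∈ (Finset.univ.erase a).powerset, A'.Nonempty →
      y A' ∈ stdSimplex ℝ A ∧ (∀ b, y A' b ≠ 0 → b ∈ bStar π A') ∧
      ρ A' ∈ Set.Icc (Qminus μQ (piStar π A' - π a)) (Qfun μQ (piStar π A' - π a))) ∧
    z = fun b => ∑ A' ∈ (Finset.univ.erase a).powerset,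
      P a A' * ρ A' * (y A' b - (if b = a then (1 : ℝ) else 0))

/-- The evolutionary dynamic: the set `V(x)[π]` of feasible transition vectors. -/
def Vset {A : Type*} [Fintype A] [DecidableEq A]
    (P : A → Finset A → ℝ) (μQ : Measure ℝ) (x π : A → ℝ) : Set (A → ℝ) :=
  {Δx | ∃ z : A → A → ℝ, (∀ a, IsAdmissible P μQ π a (z a)) ∧
    Δx = fun b => ∑ a : A, x a * z a b}

lemma qminus_nonneg (μQ : Measure ℝ) (q : ℝ) : 0 ≤ Qminus μQ q := ENNReal.toReal_nonneg

lemma qminus_le_qfun (μQ : Measure ℝ) [IsProbabilityMeasure μQ] (q : ℝ) :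
    Qminus μQ q ≤ Qfun μQ q :=
  ENNReal.toReal_mono (measure_ne_top _ _) (measure_mono Set.Iio_subset_Iic_self)

lemma qminus_pos (μQ : Measure ℝ) [IsProbabilityMeasure μQ]
    (hQ1b : ∀ q : ℝ, 0 < q → 0 < Qfun μQ q) {q : ℝ} (hq : 0 < q) :
    0 < Qminus μQ q := by
  have h1 : Qfun μQ (q/2) ≤ Qminus μQ q :=
    ENNReal.toReal_mono (measure_ne_top _ _)
      (measure_mono fun x hx => Set.mem_Iio.mpr (lt_of_le_of_lt (Set.mem_Iic.mp hx) (by linarith)))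
  exact lt_of_lt_of_le (hQ1b _ (by linarith)) h1

lemma admissible_dot {A : Type*} [Fintype A] [DecidableEq A] [Nonempty A]
    (P : A → Finset A → ℝ) (μQ : Measure ℝ) [IsProbabilityMeasure μQ]
    (hPnn : ∀ a A', 0 ≤ P a A')
    (hPempty : ∀ a, P a (∅ : Finset A) = 0)
    (hQ1a : ∀ q : ℝ, q < 0 → Qfun μQ q = 0)
    (hQ1b : ∀ q : ℝ, 0 < q → 0 < Qfun μQ q)
    (hA1i : ∀ a b : A, b ≠ a →
      0 < ∑ A' ∈ (Finset.univ.erase a).powerset.filter (fun A' => b ∈ A'), P a A')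
    (π : A → ℝ) (a : A) (z : A → ℝ) (hz : IsAdmissible P μQ π a z) :
    (0 ≤ ∑ b : A, z b * π b) ∧
    (π a = Finset.univ.sup' Finset.univ_nonempty π → ∑ b : A, z b * π b = 0) ∧
    (π a < Finset.univ.sup' Finset.univ_nonempty π → 0 < ∑ b : A, z b * π b) := by
  classical
  obtain ⟨y, ρ, hcond, hzdef⟩ := hz
  set M := Finset.univ.sup' Finset.univ_nonempty π with hM
  set s := (Finset.univ.erase a).powerset with hs
  -- the dot product as a sum over A'
  have hkey : ∑ b : A, z b * π b
      = ∑ A' ∈ s, P a A' * ρ A' * (piStar π A' - π a) := by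
    rw [hzdef]
    simp only [Finset.sum_mul]
    rw [Finset.sum_comm]
    refine Finset.sum_congr rfl fun A' hA' => ?_
    by_cases hne : A'.Nonempty
    · obtain ⟨hy1, hy2, hρ⟩ := hcond A' hA' hne
      have hysum : ∑ b : A, y A' b * π b = piStar π A' := by
        have h1 : ∀ b : A, y A' b * π b = y A' b * piStar π A' := by
          intro b
          by_cases hb : y A' b = 0
          · simp [hb]
          · have := hy2 b hb
            rw [bStar, Finset.mem_filter] at this
            rw [this.2]
        calc ∑ b : A, y A' b * π b = ∑ b : A, y A' b * piStar π A' := by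
              exact Finset.sum_congr rfl fun b _ => h1 b
          _ = (∑ b : A, y A' b) * piStar π A' := by rw [Finset.sum_mul]
          _ = piStar π A' := by rw [hy1.2, one_mul]
      have hdelta : ∑ b : A, (if b = a then (1:ℝ) else 0) * π b = π a := by
        simp
      calc ∑ b : A, P a A' * ρ A' * (y A' b - if b = a then (1:ℝ) else 0) * π b
          = P a A' * ρ A' * ∑ b : A, (y A' b * π b - (if b = a then (1:ℝ) else 0) * π b) := by
            rw [Finset.mul_sum]; exact Finset.sum_congr rfl fun b _ => by ring
        _ = P a A' * ρ A' * (piStar π A' - π a) := by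
            rw [Finset.sum_sub_distrib, hysum, hdelta]
    · have : A' = ∅ := Finset.not_nonempty_iff_eq_empty.mp hne
      subst this
      simp [hPempty a]
  have hpile : ∀ A' : Finset A, ∀ h : A'.Nonempty, piStar π A' ≤ M := by
    intro A' h
    rw [piStar, dif_pos h]
    exact Finset.sup'_le h π fun b _ => Finset.le_sup' π (Finset.mem_univ b)
  -- properties of each term
  have hterm : ∀ A' ∈ s, 0 ≤ P a A' * ρ A' * (piStar π A' - π a) ∧
      (π a = M → P a A' * ρ A' * (piStar π A' - π a) = 0) := by
    intro A' hA'
    by_cases hne : A'.Nonempty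
    · obtain ⟨hy1, hy2, hρ⟩ := hcond A' hA' hne
      have hρ0 : 0 ≤ ρ A' := le_trans (qminus_nonneg μQ _) hρ.1
      have hzero : piStar π A' - π a ≤ 0 → P a A' * ρ A' * (piStar π A' - π a) = 0 := by
        intro hd
        rcases lt_or_eq_of_le hd with hd' | hd'
        · have hρz : ρ A' = 0 := le_antisymm (hρ.2.trans_eq (hQ1a _ hd')) hρ0
          rw [hρz]; ring
        · rw [hd', mul_zero]
      constructor
      · rcases le_or_gt (piStar π A' - π a) 0 with hd | hd
        · exact (hzero hd).ge
        · exact mul_nonneg (mul_nonneg (hPnn a A') hρ0) hd.le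
      · intro ha
        refine hzero ?_
        have := hpile A' hne
        linarith
    · have : A' = ∅ := Finset.not_nonempty_iff_eq_empty.mp hne
      subst this
      simp [hPempty a]
  refine ⟨?_, ?_, ?_⟩
  · rw [hkey]
    exact Finset.sum_nonneg fun A' hA' => (hterm A' hA').1
  · intro ha
    rw [hkey]
    exact Finset.sum_eq_zero fun A' hA' => (hterm A' hA').2 ha
  · intro ha
    -- get a maximizer b*
    obtain ⟨bs, _, hbs⟩ := Finset.exists_mem_eq_sup' Finset.univ_nonempty π
    have hMbs : M = π bs := hM.trans hbs
    have hbsa : bs ≠ a := by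
      intro h; rw [h] at hMbs; rw [hMbs] at ha; exact lt_irrefl _ ha
    -- get A'0 with positive probability containing bs
    have hsum := hA1i a bs hbsa
    have : ∃ A'0 ∈ s.filter (fun A' => bs ∈ A'), 0 < P a A'0 := by
      by_contra hcon
      push_neg at hcon
      have : ∑ A' ∈ s.filter (fun A' => bs ∈ A'), P a A' = 0 :=
        Finset.sum_eq_zero fun A' hA' =>
          le_antisymm (not_lt.mp (by simpa using hcon A' hA')) (hPnn a A')
      rw [this] at hsum; exact lt_irrefl _ hsum
    obtain ⟨A'0, hA'0mem, hA'0pos⟩ := this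
    rw [Finset.mem_filter] at hA'0mem
    obtain ⟨hA'0s, hbsmem⟩ := hA'0mem
    have hne : A'0.Nonempty := ⟨bs, hbsmem⟩
    obtain ⟨hy1, hy2, hρ⟩ := hcond A'0 hA'0s hne
    have hpiStar : piStar π A'0 = M := by
      rw [piStar, dif_pos hne]
      refine le_antisymm (Finset.sup'_le hne π fun b _ => Finset.le_sup' π (Finset.mem_univ b)) ?_
      rw [hMbs]
      exact Finset.le_sup' π hbsmem
    have hd : 0 < piStar π A'0 - π a := by rw [hpiStar]; linarith
    have hρpos : 0 < ρ A'0 := lt_of_lt_of_le (qminus_pos μQ hQ1b hd) hρ.1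
    rw [hkey]
    refine Finset.sum_pos' (fun A' hA' => (hterm A' hA').1) ⟨A'0, hA'0s, ?_⟩
    exact mul_pos (mul_pos hA'0pos hρpos) hd

/-- Positive correlation: every feasible transition vector satisfies `Δx · π ≥ 0`,
with `Δx · π = 0` for all `Δx ∈ V(x)[π]` when all used actions are optimal, and
`Δx · π > 0` for all `Δx ∈ V(x)[π]` when some used action is suboptimal. -/
theorem stmt18 {A : Type*} [Fintype A] [DecidableEq A] [Nonempty A]
    (P : A → Finset A → ℝ) (μQ : Measure ℝ) [IsProbabilityMeasure μQ]
    (hPnn : ∀ a A', 0 ≤ P a A')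
    (hPsupp : ∀ a A', ¬ A' ⊆ Finset.univ.erase a → P a A' = 0)
    (hPempty : ∀ a, P a (∅ : Finset A) = 0)
    (hPsum : ∀ a, ∑ A' ∈ (Finset.univ.erase a).powerset, P a A' = 1)
    -- Assumption Q1
    (hQ1a : ∀ q : ℝ, q < 0 → Qfun μQ q = 0)
    (hQ1b : ∀ q : ℝ, 0 < q → 0 < Qfun μQ q)
    -- Assumption A1-i
    (hA1i : ∀ a b : A, b ≠ a →
      0 < ∑ A' ∈ (Finset.univ.erase a).powerset.filter (fun A' => b ∈ A'), P a A')
    (x : A → ℝ) (hx : x ∈ stdSimplex ℝ A) (π : A → ℝ) :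
    (∀ Δx ∈ Vset P μQ x π, 0 ≤ ∑ b : A, Δx b * π b) ∧
    ((∀ a : A, 0 < x a → π a = Finset.univ.sup' Finset.univ_nonempty π) →
      ∀ Δx ∈ Vset P μQ x π, ∑ b : A, Δx b * π b = 0) ∧
    ((∃ a : A, 0 < x a ∧ π a < Finset.univ.sup' Finset.univ_nonempty π) →
      ∀ Δx ∈ Vset P μQ x π, 0 < ∑ b : A, Δx b * π b) := by
  classical
  have hswap : ∀ (z : A → A → ℝ), ∑ b : A, (∑ a : A, x a * z a b) * π b
      = ∑ a : A, x a * ∑ b : A, z a b * π b := by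
    intro z
    simp only [Finset.sum_mul]
    rw [Finset.sum_comm]
    refine Finset.sum_congr rfl fun a _ => ?_
    rw [Finset.mul_sum]
    exact Finset.sum_congr rfl fun b _ => by ring
  refine ⟨?_, ?_, ?_⟩
  · rintro Δx ⟨z, hadm, rfl⟩
    rw [hswap]
    refine Finset.sum_nonneg fun a _ => mul_nonneg (hx.1 a) ?_
    exact (admissible_dot P μQ hPnn hPempty hQ1a hQ1b hA1i π a (z a) (hadm a)).1
  · rintro hall Δx ⟨z, hadm, rfl⟩
    rw [hswap]
    refine Finset.sum_eq_zero fun a _ => ?_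
    rcases lt_or_eq_of_le (hx.1 a) with hxa | hxa
    · rw [(admissible_dot P μQ hPnn hPempty hQ1a hQ1b hA1i π a (z a) (hadm a)).2.1 (hall a hxa),
        mul_zero]
    · rw [← hxa, zero_mul]
  · rintro ⟨a, hxa, hπa⟩ Δx ⟨z, hadm, rfl⟩
    rw [hswap]
    refine Finset.sum_pos' (fun c _ => mul_nonneg (hx.1 c) ?_) ⟨a, Finset.mem_univ a, ?_⟩
    · exact (admissible_dot P μQ hPnn hPempty hQ1a hQ1b hA1i π c (z c) (hadm c)).1
    · exact mul_pos hxa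
        ((admissible_dot P μQ hPnn hPempty hQ1a hQ1b hA1i π a (z a) (hadm a)).2.2 hπa)
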